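/- Let H be an inner product space over ℝ or ℂ, x_1,…,x_n ∈ H, and k_{ij} > 0 for 1 ≤ i < j ≤ n such that ‖x_i‖·‖x_j‖ − Re⟨x_i, x_j⟩ ≤ k_{ij} for all 1 ≤ i < j ≤ n. Then (∑_{i=1}^n ‖x_i‖)² ≤ ‖∑_{i=1}^n x_i‖² + 2 ∑_{1 ≤ i < j ≤ n} k_{ij}. -/

import Mathlib

theorem stmt_4 {𝕜 H : Type*} [RCLike 𝕜] [NormedAddCommGroup H] [InnerProductSpace 𝕜 H]
    (n : ℕ) (x : ℕ → H) (k : ℕ → ℕ → ℝ)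
    (hk : ∀ i ∈ Finset.Icc 1 n, ∀ j ∈ Finset.Icc 1 n, i < j → 0 < k i j)
    (h : ∀ i ∈ Finset.Icc 1 n, ∀ j ∈ Finset.Icc 1 n, i < j →
      ‖x i‖ * ‖x j‖ - RCLike.re (inner 𝕜 (x i) (x j) : 𝕜) ≤ k i j) :
    (∑ i ∈ Finset.Icc 1 n, ‖x i‖) ^ 2 ≤ ‖∑ i ∈ Finset.Icc 1 n, x i‖ ^ 2 +
      2 * ∑ i ∈ Finset.Icc 1 n, ∑ j ∈ Finset.Icc 1 n,
        (if i < j then k i j else 0) := by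
  set s := Finset.Icc 1 n with hs
  set f : ℕ → ℕ → ℝ := fun i j => ‖x i‖ * ‖x j‖ - RCLike.re (inner 𝕜 (x i) (x j) : 𝕜) with hf
  have hsym : ∀ i j, f i j = f j i := by
    intro i j
    simp only [hf, mul_comm, inner_re_symm]
  have hdiag : ∀ i, f i i = 0 := by
    intro i
    simp [hf, ← InnerProductSpace.norm_sq_eq_re_inner (𝕜 := 𝕜), sq]
  have hnorm : ‖∑ i ∈ s, x i‖ ^ 2 = ∑ i ∈ s, ∑ j ∈ s, RCLike.re (inner 𝕜 (x i) (x j) : 𝕜) := by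
    rw [InnerProductSpace.norm_sq_eq_re_inner (𝕜 := 𝕜), sum_inner]
    rw [map_sum]
    refine Finset.sum_congr rfl fun i _ => ?_
    rw [inner_sum, map_sum]
  have hsq : (∑ i ∈ s, ‖x i‖) ^ 2 = ∑ i ∈ s, ∑ j ∈ s, ‖x i‖ * ‖x j‖ := by
    rw [sq, Finset.sum_mul_sum]
  have key : ∑ i ∈ s, ∑ j ∈ s, f i j
      = 2 * ∑ i ∈ s, ∑ j ∈ s, (if i < j then f i j else 0) := by
    have split : ∀ i j, f i j = (if i < j then f i j else 0) + (if j < i then f i j else 0) := by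
      intro i j
      rcases lt_trichotomy i j with hij | hij | hij
      · simp [hij, not_lt_of_gt hij]
      · simp [hij, hdiag]
      · simp [hij, not_lt_of_gt hij]
    calc ∑ i ∈ s, ∑ j ∈ s, f i j
        = ∑ i ∈ s, ∑ j ∈ s, ((if i < j then f i j else 0) + (if j < i then f i j else 0)) := by
          refine Finset.sum_congr rfl fun i _ => Finset.sum_congr rfl fun j _ => split i j
      _ = (∑ i ∈ s, ∑ j ∈ s, (if i < j then f i j else 0))
          + ∑ i ∈ s, ∑ j ∈ s, (if j < i then f i j else 0) := by
          simp [Finset.sum_add_distrib]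
      _ = 2 * ∑ i ∈ s, ∑ j ∈ s, (if i < j then f i j else 0) := by
          rw [two_mul]
          congr 1
          rw [Finset.sum_comm]
          refine Finset.sum_congr rfl fun i _ => Finset.sum_congr rfl fun j _ => ?_
          rw [hsym]
  have hle : ∑ i ∈ s, ∑ j ∈ s, (if i < j then f i j else 0)
      ≤ ∑ i ∈ s, ∑ j ∈ s, (if i < j then k i j else 0) := by
    refine Finset.sum_le_sum fun i hi => Finset.sum_le_sum fun j hj => ?_
    by_cases hij : i < j
    · simp only [hf, if_pos hij]; exact h i hi j hj hij
    · simp [hij]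
  have expand : ∑ i ∈ s, ∑ j ∈ s, ‖x i‖ * ‖x j‖
      = (∑ i ∈ s, ∑ j ∈ s, RCLike.re (inner 𝕜 (x i) (x j) : 𝕜)) + ∑ i ∈ s, ∑ j ∈ s, f i j := by
    rw [← Finset.sum_add_distrib]
    refine Finset.sum_congr rfl fun i _ => ?_
    rw [← Finset.sum_add_distrib]
    refine Finset.sum_congr rfl fun j _ => ?_
    simp only [hf]; ring
  rw [hsq, hnorm, expand, key]
  linarith
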